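/- Let A ∈ ℝ^{n×n} be an irreducible rate matrix with positive left null vector z (z > 0 entrywise, z^T A = 0, 1^T z = 1), and let W = 1·z^T be the spectral projector. Let v ∈ ℝ^n and let θ : ℝ → ℝ^n be differentiable with θ'(t) = A·θ(t) + v for all t ≥ 0. Then for any initial condition θ(0), lim_{t→∞} A·θ(t) = (W − I)·v. -/

import Mathlib

open Matrix Filter

/-- A matrix is Metzler if all its off-diagonal entries are nonnegative. -/
def IsMetzler {n : ℕ} (Q : Matrix (Fin n) (Fin n) ℝ) : Prop :=
  ∀ i j, i ≠ j → 0 ≤ Q i j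

/-- A rate matrix is a Metzler matrix whose rows each sum to zero. -/
def IsRateMatrix {n : ℕ} (Q : Matrix (Fin n) (Fin n) ℝ) : Prop :=
  IsMetzler Q ∧ Q *ᵥ (fun _ => (1 : ℝ)) = 0

/-- A matrix is irreducible if the directed graph with an edge `i → j` whenever
`i ≠ j` and `Q i j ≠ 0` is strongly connected. -/
def IsIrreducibleMatrix {n : ℕ} (Q : Matrix (Fin n) (Fin n) ℝ) : Prop :=
  ∀ i j : Fin n, i ≠ j → Relation.TransGen (fun a b => a ≠ b ∧ Q a b ≠ 0) i j

section AuxLemmas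

variable {n : ℕ}

lemma quad_smul (S : Fin n → Fin n → ℝ) (r : ℝ) (x : Fin n → ℝ) :
    (∑ i, ∑ j, S i j * (r * x i) * (r * x j)) = r^2 * ∑ i, ∑ j, S i j * x i * x j := by
  rw [Finset.mul_sum]
  apply Finset.sum_congr rfl; intro i _
  rw [Finset.mul_sum]
  apply Finset.sum_congr rfl; intro j _
  ring

lemma quad_neg (A : Matrix (Fin n) (Fin n) ℝ)
    (hrate : IsRateMatrix A) (hirr : IsIrreducibleMatrix A)
    (z : Fin n → ℝ) (hz_pos : ∀ i, 0 < z i) (hz_left : z ᵥ* A = 0) :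
    ∀ x : Fin n → ℝ, (∑ i, z i * x i) = 0 → x ≠ 0 →
      (∑ i, ∑ j, (z i * A i j + z j * A j i) * x i * x j) < 0 := by
  intro x hzx hx
  set S : Fin n → Fin n → ℝ := fun i j => z i * A i j + z j * A j i with hSdef
  have hrow : ∀ i, ∑ j, A i j = 0 := by
    intro i
    have := congrFun hrate.2 i
    simpa [Matrix.mulVec, dotProduct] using this
  have hcol : ∀ j, ∑ i, z i * A i j = 0 := by
    intro j
    have := congrFun hz_left j
    simpa [Matrix.vecMul, dotProduct] using this
  have hSrow : ∀ i, ∑ j, S i j = 0 := by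
    intro i
    simp only [hSdef]
    rw [Finset.sum_add_distrib, ← Finset.mul_sum, hrow i, mul_zero, zero_add]
    exact hcol i
  have hScol : ∀ j, ∑ i, S i j = 0 := by
    intro j
    simp only [hSdef]
    rw [Finset.sum_add_distrib, ← Finset.mul_sum]
    rw [show (∑ i, z i * A i j) = 0 from hcol j]
    simp [← Finset.mul_sum, hrow j, mul_comm]
  -- the key identity
  have hidentity : (∑ i, ∑ j, S i j * x i * x j)
      = -(1/2) * ∑ i, ∑ j, S i j * (x i - x j)^2 := by
    have expand : ∀ i j, S i j * (x i - x j)^2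
        = S i j * x i ^ 2 + S i j * x j ^ 2 - 2 * (S i j * x i * x j) := by
      intro i j; ring
    have h1 : (∑ i, ∑ j, S i j * (x i - x j)^2)
        = (∑ i, ∑ j, S i j * x i ^ 2) + (∑ i, ∑ j, S i j * x j ^ 2)
          - 2 * (∑ i, ∑ j, S i j * x i * x j) := by
      rw [Finset.mul_sum]
      rw [← Finset.sum_add_distrib, ← Finset.sum_sub_distrib]
      apply Finset.sum_congr rfl; intro i _
      rw [Finset.mul_sum, ← Finset.sum_add_distrib, ← Finset.sum_sub_distrib]
      exact Finset.sum_congr rfl fun j _ => expand i j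
    have h2 : (∑ i, ∑ j, S i j * x i ^ 2) = 0 := by
      apply Finset.sum_eq_zero; intro i _
      rw [← Finset.sum_mul, hSrow i, zero_mul]
    have h3 : (∑ i, ∑ j, S i j * x j ^ 2) = 0 := by
      rw [Finset.sum_comm]
      apply Finset.sum_eq_zero; intro j _
      rw [← Finset.sum_mul, hScol j, zero_mul]
    rw [h2, h3] at h1
    linarith
  have hterm_nonneg : ∀ i j, 0 ≤ S i j * (x i - x j)^2 := by
    intro i j
    rcases eq_or_ne i j with rfl | hij
    · simp
    · apply mul_nonneg _ (sq_nonneg _)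
      have h1 := hrate.1 i j hij
      have h2 := hrate.1 j i hij.symm
      have := (hz_pos i).le
      have := (hz_pos j).le
      positivity
  have hsum_nonneg : 0 ≤ ∑ i, ∑ j, S i j * (x i - x j)^2 :=
    Finset.sum_nonneg fun i _ => Finset.sum_nonneg fun j _ => hterm_nonneg i j
  rw [hidentity]
  rcases lt_or_eq_of_le hsum_nonneg with h | h
  · nlinarith
  -- equality case: derive contradiction
  exfalso
  have hall : ∀ i j, S i j * (x i - x j)^2 = 0 := by
    intro i j
    have h0 : ∀ i ∈ Finset.univ, (0:ℝ) ≤ ∑ j, S i j * (x i - x j)^2 :=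
      fun i _ => Finset.sum_nonneg fun j _ => hterm_nonneg i j
    have hi : (∑ j, S i j * (x i - x j)^2) = 0 :=
      (Finset.sum_eq_zero_iff_of_nonneg h0).mp h.symm i (Finset.mem_univ i)
    exact (Finset.sum_eq_zero_iff_of_nonneg
      (fun j _ => hterm_nonneg i j)).mp hi j (Finset.mem_univ j)
  have hedge : ∀ a b : Fin n, a ≠ b → A a b ≠ 0 → x a = x b := by
    intro a b hab hAab
    have hApos : 0 < A a b := lt_of_le_of_ne (hrate.1 a b hab) (Ne.symm hAab)
    have hSpos : 0 < S a b := by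
      have h2 := hrate.1 b a hab.symm
      have := hz_pos a
      have := hz_pos b
      simp only [hSdef]
      nlinarith
    have := hall a b
    have : (x a - x b)^2 = 0 := by
      rcases mul_eq_zero.mp this with h' | h'
      · exact absurd h' hSpos.ne'
      · exact h'
    have := pow_eq_zero_iff (n := 2) (by norm_num) |>.mp this
    linarith
  have htg : ∀ a b : Fin n, Relation.TransGen (fun a b => a ≠ b ∧ A a b ≠ 0) a b → x a = x b := by
    intro a b h
    induction h with
    | single h => exact hedge _ _ h.1 h.2
    | tail _ h ih => exact ih.trans (hedge _ _ h.1 h.2)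
  have hconst : ∀ a b : Fin n, x a = x b := by
    intro a b
    rcases eq_or_ne a b with rfl | hab
    · rfl
    · exact htg a b (hirr a b hab)
  obtain ⟨i0, hi0⟩ : ∃ i, x i ≠ 0 := by
    by_contra hc; push_neg at hc
    exact hx (funext hc)
  have : (∑ i, z i * x i) = (∑ i, z i) * x i0 := by
    rw [Finset.sum_mul]
    exact Finset.sum_congr rfl fun i _ => by rw [hconst i i0]
  have hzsum_pos : 0 < ∑ i, z i := by
    have : 0 < z i0 := hz_pos i0
    exact Finset.sum_pos (fun i _ => hz_pos i) ⟨i0, Finset.mem_univ i0⟩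
  rw [this] at hzx
  rcases mul_eq_zero.mp hzx with h' | h'
  · exact hzsum_pos.ne' h'
  · exact hi0 h'

lemma coercive_of_neg (z : Fin n → ℝ) (hz_pos : ∀ i, 0 < z i)
    (Q : (Fin n → ℝ) → ℝ) (hQcont : Continuous Q)
    (hQhom : ∀ (r : ℝ) (x : Fin n → ℝ), Q (r • x) = r^2 * Q x)
    (hQneg : ∀ x : Fin n → ℝ, (∑ i, z i * x i) = 0 → x ≠ 0 → Q x < 0) :
    ∃ c > 0, ∀ x : Fin n → ℝ, (∑ i, z i * x i) = 0 →
      Q x ≤ -c * ∑ i, z i * x i ^ 2 := by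
  classical
  set h : (Fin n → ℝ) → ℝ := fun x => ∑ i, z i * x i ^ 2 with hh
  have hhcont : Continuous h := by
    apply continuous_finset_sum
    intro i _
    exact (continuous_const.mul ((continuous_apply i).pow 2))
  have hfcont : Continuous (fun x : Fin n → ℝ => ∑ i, z i * x i) := by
    apply continuous_finset_sum
    intro i _
    exact continuous_const.mul (continuous_apply i)
  set K : Set (Fin n → ℝ) := {x | (∑ i, z i * x i) = 0 ∧ h x = 1} with hK
  have hKclosed : IsClosed K := by
    apply IsClosed.inter
    · exact isClosed_eq hfcont continuous_const
    · exact isClosed_eq hhcont continuous_const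
  have hKbdd : Bornology.IsBounded K := by
    rw [Metric.isBounded_iff_subset_closedBall 0]
    refine ⟨Real.sqrt (∑ i, (z i)⁻¹), fun x hx => ?_⟩
    rw [Metric.mem_closedBall, dist_zero_right]
    have hR : (0:ℝ) ≤ Real.sqrt (∑ i, (z i)⁻¹) := Real.sqrt_nonneg _
    rw [pi_norm_le_iff_of_nonneg hR]
    intro i
    have hx2 : z i * x i ^ 2 ≤ 1 := by
      have hle : z i * x i ^ 2 ≤ ∑ j, z j * x j ^ 2 :=
        Finset.single_le_sum (f := fun j => z j * x j ^ 2)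
          (fun j _ => mul_nonneg (hz_pos j).le (sq_nonneg _)) (Finset.mem_univ i)
      exact hle.trans_eq hx.2
    have h1 : x i ^ 2 ≤ (z i)⁻¹ := by
      have h' := mul_le_mul_of_nonneg_left hx2 (inv_nonneg.mpr (hz_pos i).le)
      rwa [← mul_assoc, inv_mul_cancel₀ (hz_pos i).ne', one_mul, mul_one] at h'
    have h2 : (z i)⁻¹ ≤ ∑ j, (z j)⁻¹ :=
      Finset.single_le_sum (f := fun j => (z j)⁻¹)
        (fun j _ => (inv_pos.mpr (hz_pos j)).le) (Finset.mem_univ i)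
    have : x i ^ 2 ≤ ∑ j, (z j)⁻¹ := h1.trans h2
    calc ‖x i‖ = Real.sqrt (x i ^ 2) := by
          rw [Real.sqrt_sq_eq_abs]; rfl
      _ ≤ Real.sqrt (∑ j, (z j)⁻¹) := Real.sqrt_le_sqrt this
  have hKcompact : IsCompact K := Metric.isCompact_of_isClosed_isBounded hKclosed hKbdd
  have hhpos : ∀ x : Fin n → ℝ, x ≠ 0 → 0 < h x := by
    intro x hx
    obtain ⟨i0, hi0⟩ : ∃ i, x i ≠ 0 := by
      by_contra hc; push_neg at hc; exact hx (funext hc)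
    apply Finset.sum_pos' (fun i _ => mul_nonneg (hz_pos i).le (sq_nonneg _))
    refine ⟨i0, Finset.mem_univ i0, mul_pos (hz_pos i0) ?_⟩
    exact lt_of_le_of_ne (sq_nonneg _) (Ne.symm (pow_ne_zero 2 hi0))
  rcases Set.eq_empty_or_nonempty K with hKe | hKne
  · refine ⟨1, one_pos, fun x hzx => ?_⟩
    rcases eq_or_ne x 0 with rfl | hx
    · have hQ0 : Q 0 = 0 := by simpa using hQhom 0 0
      simp [hQ0]
    · exfalso
      have hpos := hhpos x hx
      set r := (Real.sqrt (h x))⁻¹ with hr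
      have hmem : r • x ∈ K := by
        constructor
        · simp only [Pi.smul_apply, smul_eq_mul]
          rw [show (∑ i, z i * (r * x i)) = r * ∑ i, z i * x i by
            rw [Finset.mul_sum]; exact Finset.sum_congr rfl fun i _ => by ring]
          rw [hzx, mul_zero]
        · show h (r • x) = 1
          have : h (r • x) = r^2 * h x := by
            simp only [hh, Pi.smul_apply, smul_eq_mul]
            rw [Finset.mul_sum]
            exact Finset.sum_congr rfl fun i _ => by ring
          rw [this, hr]
          rw [← Real.sqrt_inv]
          rw [Real.sq_sqrt (inv_nonneg.mpr hpos.le)]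
          exact inv_mul_cancel₀ hpos.ne'
      exact Set.eq_empty_iff_forall_notMem.mp hKe _ hmem
  · obtain ⟨x₀, hx₀K, hx₀max⟩ := hKcompact.exists_isMaxOn hKne hQcont.continuousOn
    have hx₀ne : x₀ ≠ 0 := by
      intro hc
      have := hx₀K.2
      rw [hc] at this
      simp [hh] at this
    have hQx₀ : Q x₀ < 0 := hQneg x₀ hx₀K.1 hx₀ne
    refine ⟨-Q x₀, by linarith, fun x hzx => ?_⟩
    rcases eq_or_ne x 0 with rfl | hx
    · have : Q 0 = 0 := by
        have := hQhom 0 0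
        simpa using this
      simp [this, hh]
    · have hpos := hhpos x hx
      set r := (Real.sqrt (h x))⁻¹ with hr
      have hr2 : r^2 = (h x)⁻¹ := by
        rw [hr, ← Real.sqrt_inv, Real.sq_sqrt (inv_nonneg.mpr hpos.le)]
      have hmem : r • x ∈ K := by
        constructor
        · simp only [Pi.smul_apply, smul_eq_mul]
          rw [show (∑ i, z i * (r * x i)) = r * ∑ i, z i * x i by
            rw [Finset.mul_sum]; exact Finset.sum_congr rfl fun i _ => by ring]
          rw [hzx, mul_zero]
        · show h (r • x) = 1
          have : h (r • x) = r^2 * h x := by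
            simp only [hh, Pi.smul_apply, smul_eq_mul]
            rw [Finset.mul_sum]
            exact Finset.sum_congr rfl fun i _ => by ring
          rw [this, hr2]
          exact inv_mul_cancel₀ hpos.ne'
      have hle2 : Q (r • x) ≤ Q x₀ := hx₀max hmem
      have hQr : Q (r • x) = (h x)⁻¹ * Q x := by rw [hQhom, hr2]
      rw [hQr] at hle2
      have this := hle2
      -- (h x)⁻¹ * Q x ≤ Q x₀  ⟹  Q x ≤ Q x₀ * h x = -(-Q x₀) * h x
      have : Q x ≤ Q x₀ * h x := by
        have h1 : (h x)⁻¹ * Q x * h x ≤ Q x₀ * h x :=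
          mul_le_mul_of_nonneg_right this hpos.le
        rwa [mul_comm ((h x)⁻¹), mul_assoc, inv_mul_cancel₀ hpos.ne', mul_one] at h1
      calc Q x ≤ Q x₀ * h x := this
        _ = -(-Q x₀) * h x := by ring

/-- The weighted energy derivative equals the symmetrized quadratic form. -/
lemma deriv_eq_quad (A : Matrix (Fin n) (Fin n) ℝ) (z : Fin n → ℝ) (x : Fin n → ℝ) :
    (∑ i, 2 * z i * x i * (A *ᵥ x) i)
      = ∑ i, ∑ j, (z i * A i j + z j * A j i) * x i * x j := by
  have hR : (∑ i, ∑ j, (z i * A i j + z j * A j i) * x i * x j)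
      = (∑ i, ∑ j, z i * A i j * x i * x j) + (∑ i, ∑ j, z j * A j i * x i * x j) := by
    rw [← Finset.sum_add_distrib]
    apply Finset.sum_congr rfl; intro i _
    rw [← Finset.sum_add_distrib]
    exact Finset.sum_congr rfl fun j _ => by ring
  have hswap : (∑ i, ∑ j, z j * A j i * x i * x j)
      = ∑ i, ∑ j, z i * A i j * x i * x j := by
    rw [Finset.sum_comm]
    apply Finset.sum_congr rfl; intro i _
    exact Finset.sum_congr rfl fun j _ => by ring
  rw [hR, hswap]
  rw [← Finset.sum_add_distrib]
  apply Finset.sum_congr rfl; intro i _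
  rw [Matrix.mulVec, dotProduct]
  rw [Finset.mul_sum, ← Finset.sum_add_distrib]
  exact Finset.sum_congr rfl fun j _ => by ring

end AuxLemmas

/-- Let `A` be an irreducible rate matrix with positive left null vector `z`
(`z > 0` entrywise, `zᵀ A = 0`, `1ᵀ z = 1`) and spectral projector `W = 1·zᵀ`.
If `θ` is differentiable with `θ'(t) = A θ(t) + v` for all `t ≥ 0`, then for
any initial condition `θ(0)`, `A θ(t) → (W - I) v` as `t → ∞`. -/
theorem Atheta_tendsto {n : ℕ} (A : Matrix (Fin n) (Fin n) ℝ)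
    (hrate : IsRateMatrix A) (hirr : IsIrreducibleMatrix A)
    (z : Fin n → ℝ) (hz_pos : ∀ i, 0 < z i)
    (hz_left : z ᵥ* A = 0) (hz_sum : ∑ i, z i = 1)
    (W : Matrix (Fin n) (Fin n) ℝ) (hW : W = vecMulVec (fun _ => (1 : ℝ)) z)
    (v : Fin n → ℝ) (θ : ℝ → Fin n → ℝ)
    (hθ : ∀ t : ℝ, 0 ≤ t → HasDerivAt θ (A *ᵥ θ t + v) t) :
    Tendsto (fun t : ℝ => A *ᵥ θ t) atTop (nhds ((W - 1) *ᵥ v)) := by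
  classical
  have hrowsum : ∀ i, ∑ j, A i j = 0 := by
    intro i
    have := congrFun hrate.2 i
    simpa [Matrix.mulVec, dotProduct] using this
  have hcol : ∀ j, ∑ i, z i * A i j = 0 := by
    intro j
    have := congrFun hz_left j
    simpa [Matrix.vecMul, dotProduct] using this
  -- the drift-corrected quantity u
  set u : ℝ → Fin n → ℝ := fun t => A *ᵥ θ t + (1 - W) *ᵥ v with hu
  -- A annihilates (1 - W) v up to v : A ((1-W) v) = A v
  have hAWv : A *ᵥ ((1 - W) *ᵥ v) = A *ᵥ v := by
    rw [Matrix.sub_mulVec, Matrix.one_mulVec]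
    have hWv : A *ᵥ (W *ᵥ v) = 0 := by
      ext i
      rw [hW]
      simp only [Matrix.mulVec, dotProduct, Matrix.vecMulVec_apply, one_mul,
        Pi.zero_apply]
      rw [← Finset.sum_mul, hrowsum i, zero_mul]
    rw [Matrix.mulVec_sub, hWv, sub_zero]
  -- derivative of u, componentwise
  have hθc : ∀ (t : ℝ), 0 ≤ t → ∀ j, HasDerivAt (fun s => θ s j) ((A *ᵥ θ t + v) j) t :=
    fun t ht => hasDerivAt_pi.mp (hθ t ht)
  have huc : ∀ (t : ℝ), 0 ≤ t → ∀ i, HasDerivAt (fun s => u s i) ((A *ᵥ u t) i) t := by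
    intro t ht i
    have h1 : HasDerivAt (fun s => ∑ j, A i j * θ s j)
        (∑ j, A i j * (A *ᵥ θ t + v) j) t := by
      apply HasDerivAt.fun_sum
      intro j _
      exact (hθc t ht j).const_mul (A i j)
    have h2 : HasDerivAt (fun s => u s i) (∑ j, A i j * (A *ᵥ θ t + v) j) t := by
      have : (fun s => u s i) = fun s => (∑ j, A i j * θ s j) + ((1 - W) *ᵥ v) i := by
        funext s
        simp only [hu, Pi.add_apply, Matrix.mulVec, dotProduct]
      rw [this]
      exact h1.add_const _
    convert h2 using 1
    -- (A *ᵥ u t) i = ∑ j, A i j * (A *ᵥ θ t + v) j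
    have : A *ᵥ u t = A *ᵥ (A *ᵥ θ t + v) := by
      rw [hu]
      simp only
      rw [Matrix.mulVec_add, Matrix.mulVec_add, hAWv]
    rw [this]
    simp [Matrix.mulVec, dotProduct]
  -- z-weighted mean of u vanishes
  have huz : ∀ t, (∑ i, z i * u t i) = 0 := by
    intro t
    have hA0 : ∀ w : Fin n → ℝ, (∑ i, z i * (A *ᵥ w) i) = 0 := by
      intro w
      have : (∑ i, z i * (A *ᵥ w) i) = ∑ j, (∑ i, z i * A i j) * w j := by
        simp only [Matrix.mulVec, dotProduct, Finset.mul_sum]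
        rw [Finset.sum_comm]
        apply Finset.sum_congr rfl; intro j _
        rw [Finset.sum_mul]
        exact Finset.sum_congr rfl fun i _ => by ring
      rw [this]
      apply Finset.sum_eq_zero
      intro j _
      rw [hcol j, zero_mul]
    have hW0 : (∑ i, z i * (((1 : Matrix (Fin n) (Fin n) ℝ) - W) *ᵥ v) i) = 0 := by
      have hWv : ∀ i, (W *ᵥ v) i = ∑ j, z j * v j := by
        intro i
        rw [hW]
        simp only [Matrix.mulVec, dotProduct, Matrix.vecMulVec_apply]
        exact Finset.sum_congr rfl fun j _ => by ring
      have : (∑ i, z i * (((1 : Matrix (Fin n) (Fin n) ℝ) - W) *ᵥ v) i)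
          = (∑ i, z i * v i) - (∑ i, z i) * (∑ j, z j * v j) := by
        rw [Finset.sum_mul, ← Finset.sum_sub_distrib]
        apply Finset.sum_congr rfl; intro i _
        rw [Matrix.sub_mulVec, Matrix.one_mulVec, Pi.sub_apply, hWv i]
        ring
      rw [this, hz_sum, one_mul, sub_self]
    have : (∑ i, z i * u t i)
        = (∑ i, z i * (A *ᵥ θ t) i)
          + ∑ i, z i * (((1 : Matrix (Fin n) (Fin n) ℝ) - W) *ᵥ v) i := by
      rw [← Finset.sum_add_distrib]
      apply Finset.sum_congr rfl; intro i _
      simp only [hu, Pi.add_apply]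
      ring
    rw [this, hA0, hW0, add_zero]
  -- the quadratic form and coercivity constant
  set Q : (Fin n → ℝ) → ℝ :=
    fun x => ∑ i, ∑ j, (z i * A i j + z j * A j i) * x i * x j with hQ
  have hQcont : Continuous Q := by
    apply continuous_finset_sum; intro i _
    apply continuous_finset_sum; intro j _
    exact (continuous_const.mul (continuous_apply i)).mul (continuous_apply j)
  have hQhom : ∀ (r : ℝ) (x : Fin n → ℝ), Q (r • x) = r ^ 2 * Q x := by
    intro r x
    simp only [hQ, Pi.smul_apply, smul_eq_mul]
    exact quad_smul _ r x
  have hQneg := quad_neg A hrate hirr z hz_pos hz_left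
  obtain ⟨c, hc, hcoer⟩ := coercive_of_neg z hz_pos Q hQcont hQhom hQneg
  -- energy function
  set V : ℝ → ℝ := fun t => ∑ i, z i * (u t i) ^ 2 with hV
  have hVnonneg : ∀ t, 0 ≤ V t :=
    fun t => Finset.sum_nonneg fun i _ => mul_nonneg (hz_pos i).le (sq_nonneg _)
  have hVd : ∀ (t : ℝ), 0 ≤ t → HasDerivAt V (Q (u t)) t := by
    intro t ht
    have h1 : HasDerivAt V (∑ i, z i * (2 * u t i ^ 1 * (A *ᵥ u t) i)) t := by
      apply HasDerivAt.fun_sum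
      intro i _
      have := ((huc t ht i).pow 2).const_mul (z i)
      simpa using this
    have h2 : (∑ i, z i * (2 * u t i ^ 1 * (A *ᵥ u t) i))
        = ∑ i, 2 * z i * u t i * (A *ᵥ u t) i :=
      Finset.sum_congr rfl fun i _ => by ring
    rw [h2, deriv_eq_quad A z (u t)] at h1
    exact h1
  have hQle : ∀ t, Q (u t) ≤ -c * V t := fun t => hcoer (u t) (huz t)
  -- Lyapunov decay via the auxiliary function g
  set g : ℝ → ℝ := fun t => V t * Real.exp (c * t) with hg
  have hgd : ∀ (t : ℝ), 0 ≤ t →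
      HasDerivAt g (Q (u t) * Real.exp (c * t) + V t * (Real.exp (c * t) * c)) t := by
    intro t ht
    have he : HasDerivAt (fun s => Real.exp (c * s)) (Real.exp (c * t) * c) t := by
      have hlin : HasDerivAt (fun s : ℝ => c * s) c t := by
        simpa using (hasDerivAt_id t).const_mul c
      exact (Real.hasDerivAt_exp (c * t)).comp t hlin
    exact (hVd t ht).mul he
  have hanti : AntitoneOn g (Set.Ici (0 : ℝ)) := by
    apply antitoneOn_of_deriv_nonpos (convex_Ici 0)
    · exact fun t ht => ((hgd t ht).continuousAt).continuousWithinAt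
    · intro t ht
      rw [interior_Ici] at ht
      exact ((hgd t ht.le).differentiableAt).differentiableWithinAt
    · intro t ht
      rw [interior_Ici] at ht
      rw [(hgd t ht.le).deriv]
      have h1 : Q (u t) + c * V t ≤ 0 := by linarith [hQle t]
      nlinarith [mul_le_mul_of_nonneg_right h1 (Real.exp_pos (c * t)).le,
        Real.exp_pos (c * t)]
  have hVle : ∀ t : ℝ, 0 ≤ t → V t ≤ V 0 * Real.exp (-(c * t)) := by
    intro t ht
    have hgle : g t ≤ g 0 := hanti Set.self_mem_Ici ht ht
    have hg0 : g 0 = V 0 := by simp [hg]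
    rw [hg0] at hgle
    have := mul_le_mul_of_nonneg_right hgle (Real.exp_pos (-(c * t))).le
    rw [hg, mul_assoc, ← Real.exp_add, add_neg_cancel, Real.exp_zero, mul_one] at this
    exact this
  -- V → 0
  have hVlim : Tendsto V atTop (nhds 0) := by
    have hexp : Tendsto (fun t : ℝ => V 0 * Real.exp (-(c * t))) atTop (nhds 0) := by
      have h1 : Tendsto (fun t : ℝ => -(c * t)) atTop atBot := by
        apply tendsto_neg_atTop_atBot.comp
        exact Tendsto.const_mul_atTop hc tendsto_id
      have h2 : Tendsto (fun t : ℝ => Real.exp (-(c * t))) atTop (nhds 0) :=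
        Real.tendsto_exp_atBot.comp h1
      have := h2.const_mul (V 0)
      simpa using this
    apply tendsto_of_tendsto_of_tendsto_of_le_of_le' tendsto_const_nhds hexp
    · exact Eventually.of_forall fun t => hVnonneg t
    · filter_upwards [eventually_ge_atTop (0 : ℝ)] with t ht
      exact hVle t ht
  -- each component of u → 0
  have hulim : ∀ i, Tendsto (fun t => u t i) atTop (nhds 0) := by
    intro i
    have hsq : Tendsto (fun t => z i * u t i ^ 2) atTop (nhds 0) := by
      apply tendsto_of_tendsto_of_tendsto_of_le_of_le' tendsto_const_nhds hVlim
      · exact Eventually.of_forall fun t => mul_nonneg (hz_pos i).le (sq_nonneg _)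
      · apply Eventually.of_forall
        intro t
        exact Finset.single_le_sum (f := fun j => z j * u t j ^ 2)
          (fun j _ => mul_nonneg (hz_pos j).le (sq_nonneg _)) (Finset.mem_univ i)
    have hsq2 : Tendsto (fun t => u t i ^ 2) atTop (nhds 0) := by
      have := hsq.const_mul (z i)⁻¹
      simp only [← mul_assoc, inv_mul_cancel₀ (hz_pos i).ne', one_mul, mul_zero] at this
      exact this
    have habs : Tendsto (fun t => |u t i|) atTop (nhds 0) := by
      have h1 : Tendsto (fun t => Real.sqrt (u t i ^ 2)) atTop (nhds 0) := by
        have h2 := (Real.continuous_sqrt.tendsto 0).comp hsq2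
        simpa [Function.comp_def] using h2
      refine h1.congr fun t => ?_
      rw [Real.sqrt_sq_eq_abs]
    apply tendsto_of_tendsto_of_tendsto_of_le_of_le' (f := fun t => u t i)
      (g := fun t => -|u t i|) (h := fun t => |u t i|)
    · simpa using habs.neg
    · exact habs
    · exact Eventually.of_forall fun t => neg_abs_le _
    · exact Eventually.of_forall fun t => le_abs_self _
  -- assemble
  rw [tendsto_pi_nhds]
  intro i
  have hrw : (fun t => (A *ᵥ θ t) i)
      = fun t => u t i - (((1 : Matrix (Fin n) (Fin n) ℝ) - W) *ᵥ v) i := by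
    funext t
    simp [hu]
  rw [hrw]
  have htarget : ((W - 1) *ᵥ v) i
      = 0 - (((1 : Matrix (Fin n) (Fin n) ℝ) - W) *ᵥ v) i := by
    have : (W - 1 : Matrix (Fin n) (Fin n) ℝ) = -(1 - W) := (neg_sub _ _).symm
    rw [this, Matrix.neg_mulVec]
    simp
  rw [htarget]
  exact (hulim i).sub_const _
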